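/- For every m ≥ 1 there exists a Henneberg-I graph with a designated base edge such that the complete graph K_m is a minor of it, and the graph has the 1-path property (exactly one vertex other than the base-edge endpoints has degree 2). -/

import Mathlib

open SimpleGraph

variable {α : Type*} [DecidableEq α]

/-- Validity of a Henneberg-I construction sequence (list of steps `(v, u, w)` meaning
`v ◁ (u, w)`) starting from the vertex set `S`. -/
def ValidFrom (S : Finset α) : List (α × α × α) → Prop
  | [] => True
  | (v, u, w) :: rest => v ∉ S ∧ u ∈ S ∧ w ∈ S ∧ u ≠ w ∧ ValidFrom (insert v S) rest

/-- The vertex set built by a Henneberg-I construction from base edge `(a, b)`. -/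
def buildVerts (a b : α) (l : List (α × α × α)) : Finset α :=
  l.foldl (fun s p => insert p.1 s) {a, b}

/-- The edge set built by a Henneberg-I construction from base edge `(a, b)`. -/
def buildEdges (a b : α) (l : List (α × α × α)) : Finset (Sym2 α) :=
  l.foldl (fun s p => insert s(p.1, p.2.1) (insert s(p.1, p.2.2) s)) {s(a, b)}

/-- `(V, E)` is a Henneberg-I graph with base edge `(a, b)`. -/
def IsHennebergI (V : Finset α) (E : Finset (Sym2 α)) (a b : α) : Prop :=
  a ≠ b ∧ ∃ l, ValidFrom {a, b} l ∧ V = buildVerts a b l ∧ E = buildEdges a b l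

/-- `(V, E)` is a simple 1-dof Henneberg-I graph with base non-edge `(a, b)`:
adding back the base edge `(a, b)` gives a Henneberg-I graph with base edge `(a, b)`. -/
def IsSimple1Dof (V : Finset α) (E : Finset (Sym2 α)) (a b : α) : Prop :=
  s(a, b) ∉ E ∧ IsHennebergI V (insert s(a, b) E) a b

/-- `(V', E')` is a subgraph of `(V, E)`. -/
def IsSubgraphOf (V : Finset α) (E : Finset (Sym2 α)) (V' : Finset α)
    (E' : Finset (Sym2 α)) : Prop :=
  V' ⊆ V ∧ E' ⊆ E ∧ ∀ e ∈ E', ∀ v ∈ e, v ∈ V'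

/-- `(V, E)` is wellconstrained (Laman): `|E| = 2|V| - 3` and every subgraph on `m`
vertices has at most `2m - 3` edges. -/
def IsLaman (V : Finset α) (E : Finset (Sym2 α)) : Prop :=
  E.card + 3 = 2 * V.card ∧
  ∀ V' E', IsSubgraphOf V E V' E' → E'.card ≤ 2 * V'.card - 3

/-- The degree of the vertex `x` in the edge set `E`. -/
def degreeIn (E : Finset (Sym2 α)) (x : α) : ℕ := (E.filter (fun e => x ∈ e)).card

/-- A step `p = (v, u, w)` is constructed directly on the base pair `(a, b)`. -/
def OnBase (a b : α) (p : α × α × α) : Prop :=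
  (p.2.1 = a ∧ p.2.2 = b) ∨ (p.2.1 = b ∧ p.2.2 = a)

/-- The 1-path property: exactly one vertex other than `a` and `b` has degree 2. -/
def OnePath (V : Finset α) (E : Finset (Sym2 α)) (a b : α) : Prop :=
  ∃! x, x ∈ V ∧ x ≠ a ∧ x ≠ b ∧ degreeIn E x = 2

/-- Triangle-decomposability of a graph `(V, E)`. -/
inductive TriDecomp : Finset α → Finset (Sym2 α) → Prop
  | edge (u v : α) (h : u ≠ v) : TriDecomp {u, v} {s(u, v)}
  | triangle (u v w : α) (huv : u ≠ v) (hvw : v ≠ w) (huw : u ≠ w) :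
      TriDecomp {u, v, w} {s(u, v), s(v, w), s(u, w)}
  | merge (V1 V2 V3 : Finset α) (E1 E2 E3 : Finset (Sym2 α)) (v1 v2 v3 : α)
      (h12 : v1 ≠ v2) (h23 : v2 ≠ v3) (h13 : v1 ≠ v3)
      (t1 : TriDecomp V1 E1) (t2 : TriDecomp V2 E2) (t3 : TriDecomp V3 E3)
      (i12 : V1 ∩ V2 = {v3}) (i23 : V2 ∩ V3 = {v1}) (i13 : V1 ∩ V3 = {v2})
      (e12 : E1 ∩ E2 = ∅) (e23 : E2 ∩ E3 = ∅) (e13 : E1 ∩ E3 = ∅) :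
      TriDecomp (V1 ∪ V2 ∪ V3) (E1 ∪ E2 ∪ E3)

/-- `H` is a minor of `G`: branch-set definition. -/
def HasMinor {V W : Type*} (G : SimpleGraph V) (H : SimpleGraph W) : Prop :=
  ∃ f : W → Set V,
    (∀ w, (f w).Nonempty) ∧
    (∀ w, (G.induce (f w)).Connected) ∧
    (∀ w w', w ≠ w' → Disjoint (f w) (f w')) ∧
    ∀ w w', H.Adj w w' → ∃ x ∈ f w, ∃ y ∈ f w', G.Adj x y


namespace Stmt15


def vid (M p q : ℕ) : ℕ := p * M + q + 2

def uof (M p q : ℕ) : ℕ := if q = 0 then 0 else vid M p (q-1)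
def wof (M p q : ℕ) : ℕ := if q = 0 then 1 else vid M (q-1) (q-1)

def stepH (M p q : ℕ) : ℕ × ℕ × ℕ := (vid M p q, uof M p q, wof M p q)

def LH (M : ℕ) : List (ℕ × ℕ × ℕ) :=
  (List.range (M-2)).flatMap (fun p => (List.range (p+1)).map (stepH M p))

lemma vid_lt_vid_left {M p p' q q' : ℕ} (hq : q < M) (h : p < p') :
    vid M p q < vid M p' q' := by
  unfold vid
  have : (p+1) * M ≤ p' * M := Nat.mul_le_mul_right M (by omega)
  nlinarith

lemma vid_lt_vid_right {M p q q' : ℕ} (h : q < q') : vid M p q < vid M p q' := by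
  unfold vid; omega

lemma vid_inj {M p p' q q' : ℕ} (hq : q < M) (hq' : q' < M)
    (h : vid M p q = vid M p' q') : p = p' ∧ q = q' := by
  unfold vid at h
  rcases lt_trichotomy p p' with hc | hc | hc
  · exact absurd h (Nat.ne_of_lt (vid_lt_vid_left hq hc))
  · subst hc; omega
  · exact absurd h.symm (Nat.ne_of_lt (vid_lt_vid_left hq' hc))

lemma two_le_vid (M p q : ℕ) : 2 ≤ vid M p q := by unfold vid; omega

lemma uof_lt {M p q : ℕ} (h3 : 3 ≤ M) : uof M p q < vid M p q := by
  unfold uof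
  split
  · have := two_le_vid M p q; omega
  · exact vid_lt_vid_right (by omega)

lemma wof_lt {M p q : ℕ} (h3 : 3 ≤ M) (hqp : q ≤ p) (hp : p < M - 2) : wof M p q < vid M p q := by
  unfold wof
  split
  · have := two_le_vid M p q; omega
  · rcases Nat.lt_or_ge (q-1) p with h | h
    · exact vid_lt_vid_left (by omega) h
    · have : q - 1 = p := by omega
      subst this
      exact vid_lt_vid_right (by omega)

lemma uof_ne_wof {M p q : ℕ} (h3 : 3 ≤ M) (hqp : q ≤ p) (hp : p < M - 2) :
    uof M p q ≠ wof M p q := by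
  unfold uof wof
  split
  · omega
  · intro h
    have := (vid_inj (by omega) (by omega) h).1
    omega

lemma mem_LH {M : ℕ} {x : ℕ × ℕ × ℕ} :
    x ∈ LH M ↔ ∃ p, p < M - 2 ∧ ∃ q, q ≤ p ∧ x = stepH M p q := by
  simp only [LH, List.mem_flatMap, List.mem_map, List.mem_range]
  constructor
  · rintro ⟨p, hp, q, hq, rfl⟩; exact ⟨p, hp, q, by omega, rfl⟩
  · rintro ⟨p, hp, q, hq, rfl⟩; exact ⟨p, hp, q, by omega, rfl⟩



lemma validFrom_of (l : List (ℕ × ℕ × ℕ)) :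
    ∀ S : Finset ℕ,
    ((l.map Prod.fst).Pairwise (· < ·)) →
    (∀ x ∈ S, ∀ p ∈ l, x < p.1) →
    (∀ p ∈ l, p.2.1 ≠ p.2.2 ∧ p.2.1 < p.1 ∧ p.2.2 < p.1 ∧
      (p.2.1 ∈ S ∨ ∃ r ∈ l, r.1 = p.2.1) ∧ (p.2.2 ∈ S ∨ ∃ r ∈ l, r.1 = p.2.2)) →
    ValidFrom S l := by
  induction l with
  | nil => intro S _ _ _; trivial
  | cons a t ih =>
    intro S hsort hS h
    obtain ⟨huw, hu, hw, hmu, hmw⟩ := h a List.mem_cons_self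
    have hsort' : (t.map Prod.fst).Pairwise (· < ·) := by
      simpa using hsort.of_cons
    have hlt : ∀ r ∈ t, a.1 < r.1 := by
      have h2 := hsort
      rw [List.map_cons, List.pairwise_cons] at h2
      intro r hr
      exact h2.1 r.1 (List.mem_map_of_mem (f := Prod.fst) hr)
    have huS : a.2.1 ∈ S := by
      rcases hmu with h' | ⟨r, hr, hrf⟩
      · exact h'
      · rcases List.mem_cons.mp hr with rfl | hrt
        · omega
        · have := hlt r hrt; omega
    have hwS : a.2.2 ∈ S := by
      rcases hmw with h' | ⟨r, hr, hrf⟩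
      · exact h'
      · rcases List.mem_cons.mp hr with rfl | hrt
        · omega
        · have := hlt r hrt; omega
    obtain ⟨v, u, w⟩ := a
    refine ⟨fun hv => absurd (hS v hv _ List.mem_cons_self) (lt_irrefl v), huS, hwS, huw, ?_⟩
    apply ih
    · exact hsort'
    · intro x hx p hp
      rcases Finset.mem_insert.mp hx with rfl | hxS
      · exact hlt p hp
      · exact hS x hxS p (List.mem_cons_of_mem _ hp)
    · intro p hp
      obtain ⟨h1, h2, h3, h4, h5⟩ := h p (List.mem_cons_of_mem _ hp)
      refine ⟨h1, h2, h3, ?_, ?_⟩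
      · rcases h4 with h' | ⟨r, hr, hrf⟩
        · exact Or.inl (Finset.mem_insert_of_mem h')
        · rcases List.mem_cons.mp hr with rfl | hrt
          · exact Or.inl (hrf ▸ Finset.mem_insert_self _ _)
          · exact Or.inr ⟨r, hrt, hrf⟩
      · rcases h5 with h' | ⟨r, hr, hrf⟩
        · exact Or.inl (Finset.mem_insert_of_mem h')
        · rcases List.mem_cons.mp hr with rfl | hrt
          · exact Or.inl (hrf ▸ Finset.mem_insert_self _ _)
          · exact Or.inr ⟨r, hrt, hrf⟩

lemma mem_foldl_insert (l : List (ℕ × ℕ × ℕ)) :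
    ∀ (init : Finset ℕ) (x : ℕ),
    (x ∈ l.foldl (fun s p => insert p.1 s) init ↔ x ∈ init ∨ ∃ p ∈ l, x = p.1) := by
  induction l with
  | nil => simp
  | cons a t ih =>
    intro init x
    simp only [List.foldl_cons, ih, Finset.mem_insert, List.mem_cons]
    constructor
    · rintro (( rfl | h) | ⟨p, hp, rfl⟩)
      · exact Or.inr ⟨a, Or.inl rfl, rfl⟩
      · exact Or.inl h
      · exact Or.inr ⟨p, Or.inr hp, rfl⟩
    · rintro (h | ⟨p, (rfl | hp), rfl⟩)
      · exact Or.inl (Or.inr h)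
      · exact Or.inl (Or.inl rfl)
      · exact Or.inr ⟨p, hp, rfl⟩

lemma mem_buildVerts (a b : ℕ) (l : List (ℕ × ℕ × ℕ)) (x : ℕ) :
    x ∈ buildVerts a b l ↔ x = a ∨ x = b ∨ ∃ p ∈ l, x = p.1 := by
  rw [buildVerts, mem_foldl_insert]
  simp [or_assoc]

lemma mem_foldl_edges (l : List (ℕ × ℕ × ℕ)) :
    ∀ (init : Finset (Sym2 ℕ)) (e : Sym2 ℕ),
    (e ∈ l.foldl (fun s p => insert s(p.1, p.2.1) (insert s(p.1, p.2.2) s)) init ↔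
      e ∈ init ∨ ∃ p ∈ l, e = s(p.1, p.2.1) ∨ e = s(p.1, p.2.2)) := by
  induction l with
  | nil => simp
  | cons a t ih =>
    intro init e
    simp only [List.foldl_cons, ih, Finset.mem_insert, List.mem_cons]
    constructor
    · rintro ((rfl | rfl | h) | ⟨p, hp, hh⟩)
      · exact Or.inr ⟨a, Or.inl rfl, Or.inl rfl⟩
      · exact Or.inr ⟨a, Or.inl rfl, Or.inr rfl⟩
      · exact Or.inl h
      · exact Or.inr ⟨p, Or.inr hp, hh⟩
    · rintro (h | ⟨p, (rfl | hp), hh⟩)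
      · exact Or.inl (Or.inr (Or.inr h))
      · rcases hh with rfl | rfl
        · exact Or.inl (Or.inl rfl)
        · exact Or.inl (Or.inr (Or.inl rfl))
      · exact Or.inr ⟨p, hp, hh⟩

lemma mem_buildEdges (a b : ℕ) (l : List (ℕ × ℕ × ℕ)) (e : Sym2 ℕ) :
    e ∈ buildEdges a b l ↔ e = s(a, b) ∨ ∃ p ∈ l, e = s(p.1, p.2.1) ∨ e = s(p.1, p.2.2) := by
  rw [buildEdges, mem_foldl_edges]
  simp


lemma stepH_fst (M p q : ℕ) : (stepH M p q).1 = vid M p q := rfl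

lemma sorted_firsts (M : ℕ) : ((LH M).map Prod.fst).Pairwise (· < ·) := by
  unfold LH
  rw [List.map_flatMap]
  rw [List.pairwise_flatMap]
  constructor
  · intro p hp
    rw [List.map_map]
    have : (Prod.fst ∘ stepH M p) = vid M p := by
      funext q; rfl
    rw [this]
    refine (List.pairwise_lt_range (n := p+1)).map (vid M p) ?_
    intro q q' h
    exact vid_lt_vid_right h
  · refine (List.pairwise_lt_range (n := M-2)).imp_of_mem ?_
    intro a b ha hb hab x hx y hy
    simp only [List.mem_map, List.mem_range] at hx hy ha hb
    obtain ⟨r, ⟨i, hi, rfl⟩, rfl⟩ := hx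
    obtain ⟨r', ⟨j, hj, rfl⟩, rfl⟩ := hy
    rw [stepH_fst, stepH_fst]
    exact vid_lt_vid_left (by omega) hab

lemma validFrom_LH {M : ℕ} (h3 : 3 ≤ M) : ValidFrom {0, 1} (LH M) := by
  apply validFrom_of
  · exact sorted_firsts M
  · intro x hx p hp
    obtain ⟨pp, hpp, qq, hqq, rfl⟩ := mem_LH.mp hp
    have := two_le_vid M pp qq
    rw [stepH_fst]
    rcases Finset.mem_insert.mp hx with rfl | hx1
    · omega
    · rcases Finset.mem_singleton.mp hx1 with rfl
      omega
  · intro p hp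
    obtain ⟨pp, hpp, qq, hqq, rfl⟩ := mem_LH.mp hp
    refine ⟨uof_ne_wof h3 hqq hpp, uof_lt h3, wof_lt h3 hqq hpp, ?_, ?_⟩
    · rcases eq_or_ne qq 0 with rfl | hqq0
      · left; simp [stepH, uof]
      · right
        refine ⟨stepH M pp (qq-1), mem_LH.mpr ⟨pp, hpp, qq-1, by omega, rfl⟩, ?_⟩
        show vid M pp (qq-1) = uof M pp qq
        rw [uof, if_neg hqq0]
    · rcases eq_or_ne qq 0 with rfl | hqq0
      · left; simp [stepH, wof]
      · right
        refine ⟨stepH M (qq-1) (qq-1), mem_LH.mpr ⟨qq-1, by omega, qq-1, le_rfl, rfl⟩, ?_⟩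
        show vid M (qq-1) (qq-1) = wof M pp qq
        rw [wof, if_neg hqq0]

def VH (M : ℕ) : Finset ℕ := buildVerts 0 1 (LH M)
def EH (M : ℕ) : Finset (Sym2 ℕ) := buildEdges 0 1 (LH M)

lemma mem_VH {M x : ℕ} :
    x ∈ VH M ↔ x = 0 ∨ x = 1 ∨ ∃ p, p < M - 2 ∧ ∃ q, q ≤ p ∧ x = vid M p q := by
  rw [VH, mem_buildVerts]
  constructor
  · rintro (rfl | rfl | ⟨p, hp, rfl⟩)
    · exact Or.inl rfl
    · exact Or.inr (Or.inl rfl)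
    · obtain ⟨pp, hpp, qq, hqq, rfl⟩ := mem_LH.mp hp
      exact Or.inr (Or.inr ⟨pp, hpp, qq, hqq, rfl⟩)
  · rintro (rfl | rfl | ⟨p, hp, q, hq, rfl⟩)
    · exact Or.inl rfl
    · exact Or.inr (Or.inl rfl)
    · exact Or.inr (Or.inr ⟨stepH M p q, mem_LH.mpr ⟨p, hp, q, hq, rfl⟩, rfl⟩)

lemma mem_EH {M : ℕ} {e : Sym2 ℕ} :
    e ∈ EH M ↔ e = s(0, 1) ∨ ∃ p, p < M - 2 ∧ ∃ q, q ≤ p ∧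
      (e = s(vid M p q, uof M p q) ∨ e = s(vid M p q, wof M p q)) := by
  rw [EH, mem_buildEdges]
  constructor
  · rintro (rfl | ⟨p, hp, hh⟩)
    · exact Or.inl rfl
    · obtain ⟨pp, hpp, qq, hqq, rfl⟩ := mem_LH.mp hp
      exact Or.inr ⟨pp, hpp, qq, hqq, hh⟩
  · rintro (rfl | ⟨p, hp, q, hq, hh⟩)
    · exact Or.inl rfl
    · exact Or.inr ⟨stepH M p q, mem_LH.mpr ⟨p, hp, q, hq, rfl⟩, hh⟩

def T (M : ℕ) : ℕ := vid M (M-3) (M-3)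

lemma deg_T {M : ℕ} (h3 : 3 ≤ M) : degreeIn (EH M) (T M) = 2 := by
  have hTuw : uof M (M-3) (M-3) ≠ wof M (M-3) (M-3) := uof_ne_wof h3 le_rfl (by omega)
  have hfil : (EH M).filter (fun e => T M ∈ e) =
      {s(T M, uof M (M-3) (M-3)), s(T M, wof M (M-3) (M-3))} := by
    ext e
    rw [Finset.mem_filter, Finset.mem_insert, Finset.mem_singleton]
    constructor
    · rintro ⟨he, hT⟩
      rcases mem_EH.mp he with rfl | ⟨p, hp, q, hq, (rfl | rfl)⟩
      · rw [Sym2.mem_iff] at hT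
        have := two_le_vid M (M-3) (M-3)
        unfold T at hT; omega
      · rw [Sym2.mem_iff] at hT
        rcases hT with hT | hT
        · obtain ⟨h1, h2⟩ := vid_inj (by omega) (by omega) hT.symm
          subst h1; rw [h2]; left; rfl
        · exfalso
          unfold uof at hT
          split at hT
          · have := two_le_vid M (M-3) (M-3); unfold T at hT; omega
          · obtain ⟨h1, h2⟩ := vid_inj (by omega) (by omega) hT.symm
            omega
      · rw [Sym2.mem_iff] at hT
        rcases hT with hT | hT
        · obtain ⟨h1, h2⟩ := vid_inj (by omega) (by omega) hT.symm
          subst h1; rw [h2]; right; rfl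
        · exfalso
          unfold wof at hT
          split at hT
          · have := two_le_vid M (M-3) (M-3); unfold T at hT; omega
          · obtain ⟨h1, h2⟩ := vid_inj (by omega) (by omega) hT.symm
            omega
    · rintro (rfl | rfl)
      · exact ⟨mem_EH.mpr (Or.inr ⟨M-3, by omega, M-3, le_rfl, Or.inl rfl⟩), by
          rw [Sym2.mem_iff]; left; rfl⟩
      · exact ⟨mem_EH.mpr (Or.inr ⟨M-3, by omega, M-3, le_rfl, Or.inr rfl⟩), by
          rw [Sym2.mem_iff]; left; rfl⟩
  rw [degreeIn, hfil, Finset.card_insert_of_notMem, Finset.card_singleton]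
  rw [Finset.mem_singleton]
  intro h
  exact hTuw (Sym2.congr_right.mp h)

lemma deg_ge3 {M p q : ℕ} (h3 : 3 ≤ M) (hp : p < M - 2) (hq : q ≤ p)
    (hne : ¬(p = M - 3 ∧ q = M - 3)) : 3 ≤ degreeIn (EH M) (vid M p q) := by
  set x := vid M p q with hx
  set e1 := s(x, uof M p q) with he1
  set e2 := s(x, wof M p q) with he2
  -- the third edge: the next vertex adjacent to x
  obtain ⟨y, hy, hyE⟩ : ∃ y, x < y ∧ s(y, x) ∈ EH M := by
    rcases Nat.lt_or_ge q p with hqp | hqp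
    · refine ⟨vid M p (q+1), vid_lt_vid_right (by omega), ?_⟩
      apply mem_EH.mpr
      refine Or.inr ⟨p, hp, q+1, by omega, Or.inl ?_⟩
      rw [uof, if_neg (by omega)]
      norm_num
      simp [hx]
    · have hqp' : q = p := by omega
      subst hqp'
      have hpM : q < M - 3 := by omega
      refine ⟨vid M (q+1) (q+1), vid_lt_vid_left (by omega) (by omega), ?_⟩
      apply mem_EH.mpr
      refine Or.inr ⟨q+1, by omega, q+1, le_rfl, Or.inr ?_⟩
      rw [wof, if_neg (by omega)]
      norm_num
      simp [hx]
  set e3 := s(y, x) with he3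
  have hu : uof M p q < x := uof_lt h3
  have hw : wof M p q < x := wof_lt h3 hq hp
  have huw : uof M p q ≠ wof M p q := uof_ne_wof h3 hq hp
  have h12 : e1 ≠ e2 := by
    intro h
    rcases Sym2.eq_iff.mp h with ⟨-, h'⟩ | ⟨h', h''⟩
    · exact huw h'
    · omega
  have h13 : e1 ≠ e3 := by
    intro h
    rcases Sym2.eq_iff.mp h with ⟨h', -⟩ | ⟨-, h'⟩ <;> omega
  have h23 : e2 ≠ e3 := by
    intro h
    rcases Sym2.eq_iff.mp h with ⟨h', -⟩ | ⟨-, h'⟩ <;> omega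
  have hsub : ({e1, e2, e3} : Finset (Sym2 ℕ)) ⊆ (EH M).filter (fun e => x ∈ e) := by
    intro e he
    rcases Finset.mem_insert.mp he with rfl | he'
    · exact Finset.mem_filter.mpr ⟨mem_EH.mpr (Or.inr ⟨p, hp, q, hq, Or.inl rfl⟩),
        Sym2.mem_iff.mpr (Or.inl rfl)⟩
    rcases Finset.mem_insert.mp he' with rfl | he''
    · exact Finset.mem_filter.mpr ⟨mem_EH.mpr (Or.inr ⟨p, hp, q, hq, Or.inr rfl⟩),
        Sym2.mem_iff.mpr (Or.inl rfl)⟩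
    rcases Finset.mem_singleton.mp he'' with rfl
    · exact Finset.mem_filter.mpr ⟨hyE, Sym2.mem_iff.mpr (Or.inr rfl)⟩
  have hcard : ({e1, e2, e3} : Finset (Sym2 ℕ)).card = 3 := by
    rw [Finset.card_insert_of_notMem (by simp [h12, h13]), Finset.card_pair h23]
  calc 3 = ({e1, e2, e3} : Finset (Sym2 ℕ)).card := hcard.symm
    _ ≤ _ := Finset.card_le_card hsub

def Pset (M p : ℕ) : Set ℕ := {x | ∃ q ≤ p, x = vid M p q}

lemma adjEH {M x y : ℕ} (h : s(x, y) ∈ EH M) (hxy : x ≠ y) :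
    (SimpleGraph.fromEdgeSet ((EH M : Set (Sym2 ℕ)))).Adj x y := by
  rw [SimpleGraph.fromEdgeSet_adj]
  exact ⟨Finset.mem_coe.mpr h, hxy⟩

lemma connected_Pset {M p : ℕ} (h3 : 3 ≤ M) (hp : p < M - 2) :
    ((SimpleGraph.fromEdgeSet ((EH M : Set (Sym2 ℕ)))).induce (Pset M p)).Connected := by
  set G := SimpleGraph.fromEdgeSet ((EH M : Set (Sym2 ℕ))) with hG
  have hbase : vid M p 0 ∈ Pset M p := ⟨0, Nat.zero_le p, rfl⟩
  have key : ∀ q, q ≤ p → ∀ (h : vid M p q ∈ Pset M p),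
      (G.induce (Pset M p)).Reachable ⟨vid M p 0, hbase⟩ ⟨vid M p q, h⟩ := by
    intro q
    induction q with
    | zero => intro _ _; exact SimpleGraph.Reachable.refl _
    | succ n ih =>
      intro hq h
      have hn : n ≤ p := by omega
      refine (ih hn ⟨n, hn, rfl⟩).trans (SimpleGraph.Adj.reachable ?_)
      show G.Adj (vid M p n) (vid M p (n+1))
      have hlt : vid M p n < vid M p (n+1) := vid_lt_vid_right (by omega)
      have hmem : s(vid M p (n+1), vid M p n) ∈ EH M := by
        apply mem_EH.mpr
        refine Or.inr ⟨p, hp, n+1, by omega, Or.inl ?_⟩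
        rw [uof, if_neg (by omega)]
        norm_num
      rw [Sym2.eq_swap] at hmem
      exact adjEH hmem (by omega)
  rw [SimpleGraph.connected_iff]
  refine ⟨?_, ⟨⟨vid M p 0, hbase⟩⟩⟩
  rintro ⟨xu, hxu⟩ ⟨xv, hxv⟩
  obtain ⟨qu, hqu, rfl⟩ := hxu
  obtain ⟨qv, hqv, rfl⟩ := hxv
  exact (key qu hqu _).symm.trans (key qv hqv _)

lemma connected_singleton (G : SimpleGraph ℕ) (x : ℕ) :
    (G.induce ({x} : Set ℕ)).Connected := by
  rw [SimpleGraph.connected_iff]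
  refine ⟨?_, ⟨⟨x, rfl⟩⟩⟩
  rintro ⟨a, ha⟩ ⟨b, hb⟩
  rcases Set.mem_singleton_iff.mp ha
  rcases Set.mem_singleton_iff.mp hb
  exact SimpleGraph.Reachable.refl _

lemma Pset_ge2 {M p x : ℕ} (h : x ∈ Pset M p) : 2 ≤ x := by
  obtain ⟨q, _, rfl⟩ := h
  exact two_le_vid M p q

lemma Pset_disjoint {M p p' : ℕ} (hp : p < M) (hp' : p' < M) (hne : p ≠ p') :
    Disjoint (Pset M p) (Pset M p') := by
  rw [Set.disjoint_left]
  rintro x ⟨q, hq, rfl⟩ ⟨q', hq', heq⟩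
  exact hne (vid_inj (by omega) (by omega) heq).1

lemma hasMinor_EH {M m : ℕ} (h3 : 3 ≤ M) (hm : 1 ≤ m) (hmM : m ≤ M) :
    HasMinor (SimpleGraph.fromEdgeSet ((EH M : Set (Sym2 ℕ)))) (completeGraph (Fin m)) := by
  set G := SimpleGraph.fromEdgeSet ((EH M : Set (Sym2 ℕ))) with hG
  set f : Fin m → Set ℕ := fun w =>
    if w.val = 0 then {0} else if w.val = 1 then {1} else Pset M (w.val - 2) with hf
  have hcases : ∀ w : Fin m, (f w = {0} ∧ w.val = 0) ∨ (f w = {1} ∧ w.val = 1) ∨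
      (f w = Pset M (w.val - 2) ∧ 2 ≤ w.val ∧ w.val - 2 < M - 2) := by
    intro w
    by_cases h0 : w.val = 0
    · exact Or.inl ⟨by rw [hf]; simp [h0], h0⟩
    by_cases h1 : w.val = 1
    · exact Or.inr (Or.inl ⟨by rw [hf]; simp [h0, h1], h1⟩)
    · have hwm : w.val < m := w.isLt
      exact Or.inr (Or.inr ⟨by rw [hf]; simp [h0, h1], by omega, by omega⟩)
  refine ⟨f, ?_, ?_, ?_, ?_⟩
  · -- nonempty
    intro w
    rcases hcases w with ⟨he, _⟩ | ⟨he, _⟩ | ⟨he, _, _⟩ <;> rw [he]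
    · exact ⟨0, rfl⟩
    · exact ⟨1, rfl⟩
    · exact ⟨vid M (w.val - 2) 0, 0, Nat.zero_le _, rfl⟩
  · -- connected
    intro w
    rcases hcases w with ⟨he, _⟩ | ⟨he, _⟩ | ⟨he, _, hb⟩ <;> rw [he]
    · exact connected_singleton G 0
    · exact connected_singleton G 1
    · exact connected_Pset h3 hb
  · -- disjoint
    intro w w' hne
    have hvne : w.val ≠ w'.val := fun h => hne (Fin.ext h)
    rcases hcases w with ⟨he, hv⟩ | ⟨he, hv⟩ | ⟨he, hv, hb⟩ <;>
      rcases hcases w' with ⟨he', hv'⟩ | ⟨he', hv'⟩ | ⟨he', hv', hb'⟩ <;> rw [he, he']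
    · omega
    · simp
    · rw [Set.disjoint_left]
      rintro x rfl hx
      have := Pset_ge2 hx; omega
    · simp
    · omega
    · rw [Set.disjoint_left]
      rintro x rfl hx
      have := Pset_ge2 hx; omega
    · rw [Set.disjoint_right]
      rintro x rfl hx
      have := Pset_ge2 hx; omega
    · rw [Set.disjoint_right]
      rintro x rfl hx
      have := Pset_ge2 hx; omega
    · exact Pset_disjoint (by omega) (by omega) (by omega)
  · -- adjacency
    have aux : ∀ a b : Fin m, a.val < b.val → ∃ x ∈ f a, ∃ y ∈ f b, G.Adj x y := by
      intro a b hab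
      rcases hcases a with ⟨he, hv⟩ | ⟨he, hv⟩ | ⟨he, hv, hb1⟩ <;>
        rcases hcases b with ⟨he', hv'⟩ | ⟨he', hv'⟩ | ⟨he', hv', hb'⟩ <;>
        rw [he, he'] <;> try omega
      · -- {0}, {1}
        exact ⟨0, rfl, 1, rfl, adjEH (mem_EH.mpr (Or.inl rfl)) (by omega)⟩
      · -- {0}, Pset
        set p' := b.val - 2 with hp'
        refine ⟨0, rfl, vid M p' 0, ⟨0, Nat.zero_le _, rfl⟩, ?_⟩
        have hmem : s(vid M p' 0, 0) ∈ EH M := by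
          apply mem_EH.mpr
          refine Or.inr ⟨p', hb', 0, Nat.zero_le _, Or.inl ?_⟩
          rw [uof, if_pos rfl]
        rw [Sym2.eq_swap] at hmem
        exact adjEH hmem (by have := two_le_vid M p' 0; omega)
      · -- {1}, Pset
        set p' := b.val - 2 with hp'
        refine ⟨1, rfl, vid M p' 0, ⟨0, Nat.zero_le _, rfl⟩, ?_⟩
        have hmem : s(vid M p' 0, 1) ∈ EH M := by
          apply mem_EH.mpr
          refine Or.inr ⟨p', hb', 0, Nat.zero_le _, Or.inr ?_⟩
          rw [wof, if_pos rfl]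
        rw [Sym2.eq_swap] at hmem
        exact adjEH hmem (by have := two_le_vid M p' 0; omega)
      · -- Pset, Pset
        set p := a.val - 2 with hp
        set p' := b.val - 2 with hp'
        have hpp' : p < p' := by omega
        refine ⟨vid M p p, ⟨p, le_rfl, rfl⟩, vid M p' (p+1), ⟨p+1, by omega, rfl⟩, ?_⟩
        have hmem : s(vid M p' (p+1), vid M p p) ∈ EH M := by
          apply mem_EH.mpr
          refine Or.inr ⟨p', hb', p+1, by omega, Or.inr ?_⟩
          rw [wof, if_neg (by omega)]
          norm_num
        rw [Sym2.eq_swap] at hmem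
        have hlt : vid M p p < vid M p' (p+1) := vid_lt_vid_left (by omega) hpp'
        exact adjEH hmem (by omega)
    intro w w' hadj
    have hne : w ≠ w' := by
      intro h
      rw [h] at hadj
      exact (completeGraph (Fin m)).irrefl hadj
    have hvne : w.val ≠ w'.val := fun h => hne (Fin.ext h)
    rcases Nat.lt_or_ge w.val w'.val with hlt | hge
    · exact aux w w' hlt
    · obtain ⟨x, hx, y, hy, hadj'⟩ := aux w' w (by omega)
      exact ⟨y, hy, x, hx, hadj'.symm⟩
end Stmt15

/-- For every `m ≥ 1` there exists a Henneberg-I graph with a designated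
base edge that has the complete graph `K_m` as a minor and has the 1-path property
(exactly one vertex other than the base-edge endpoints has degree 2). -/
theorem stmt15 (m : ℕ) (hm : 1 ≤ m) :
    ∃ (V : Finset ℕ) (E : Finset (Sym2 ℕ)) (a b : ℕ),
      IsHennebergI V E a b ∧
      (∃! x, x ∈ V ∧ x ≠ a ∧ x ≠ b ∧ degreeIn E x = 2) ∧
      HasMinor (SimpleGraph.fromEdgeSet (E : Set (Sym2 ℕ)))
        (completeGraph (Fin m)) := by
  set M := max m 3 with hM
  have h3 : 3 ≤ M := le_max_right m 3
  have hmM : m ≤ M := le_max_left m 3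
  refine ⟨Stmt15.VH M, Stmt15.EH M, 0, 1,
    ⟨by norm_num, Stmt15.LH M, Stmt15.validFrom_LH h3, rfl, rfl⟩, ?_,
    Stmt15.hasMinor_EH h3 hm hmM⟩
  have hT2 : 2 ≤ Stmt15.T M := Stmt15.two_le_vid M (M-3) (M-3)
  refine ⟨Stmt15.T M, ⟨?_, by omega, by omega, Stmt15.deg_T h3⟩, ?_⟩
  · exact Stmt15.mem_VH.mpr (Or.inr (Or.inr ⟨M-3, by omega, M-3, le_rfl, rfl⟩))
  · rintro y ⟨hyV, hy0, hy1, hydeg⟩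
    rcases Stmt15.mem_VH.mp hyV with rfl | rfl | ⟨p, hp, q, hq, rfl⟩
    · exact absurd rfl hy0
    · exact absurd rfl hy1
    · by_contra hne
      have hne' : ¬(p = M - 3 ∧ q = M - 3) := by
        rintro ⟨rfl, rfl⟩
        exact hne rfl
      have := Stmt15.deg_ge3 h3 hp hq hne'
      omega
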